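/- Steinberg's theorem: Let k be a field, M a monoid, V a k-vector space, and ρ : M → End_k(V) an injective (effective) linear representation. Give each tensor power V^{⊗d} (d ≥ 0) the diagonal M-action determined by m·(v₁ ⊗ ⋯ ⊗ v_d) = (m·v₁) ⊗ ⋯ ⊗ (m·v_d). Then the direct sum ⊕_{d≥0} V^{⊗d} is a faithful module: if an element a of the monoid algebra k[M] acts as zero on V^{⊗d} for every d ≥ 0, then a = 0. -/

import Mathlib

/-- Key lemma: pairing the hypothesis on the `d`-th tensor power with
elementary tensors and dual functionals yields vanishing of sums of products
of matrix coefficients. -/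
lemma steinberg_key
    {k : Type*} [Field k] {M : Type*} [Monoid M]
    {V : Type*} [AddCommGroup V] [Module k V]
    (ρ : M →* Module.End k V)
    (a : MonoidAlgebra k M)
    (ha : ∀ d : ℕ,
      a.coeff.sum (fun m c =>
        c • PiTensorProduct.map (fun _ : Fin d => (ρ m : V →ₗ[k] V))) = 0)
    (d : ℕ) (φ : Fin d → Module.Dual k V) (v : Fin d → V) :
    ∑ m ∈ a.coeff.support, a.coeff m * ∏ j, φ j (ρ m (v j)) = 0 := by
  classical
  set L : PiTensorProduct k (fun _ : Fin d => V) →ₗ[k] k :=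
    PiTensorProduct.lift ((MultilinearMap.mkPiAlgebra k (Fin d) k).compLinearMap φ) with hL
  have h0 := ha d
  have h1 := congrArg (fun f => L (f (PiTensorProduct.tprod k v))) h0
  simpa [hL, Finsupp.sum, map_sum, PiTensorProduct.map_tprod, smul_eq_mul] using h1

/-- **Steinberg's theorem.** If `ρ : M → End_k(V)` is an effective (injective)
representation of a monoid `M`, then the direct sum of all tensor powers
`V^{⊗ d}` with the diagonal `M`-action is a faithful module: any element of the
monoid algebra `k[M]` acting as zero on every tensor power is zero. -/
theorem steinberg_faithful_tensor_powers
    {k : Type*} [Field k] {M : Type*} [Monoid M]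
    {V : Type*} [AddCommGroup V] [Module k V]
    (ρ : M →* Module.End k V) (hρ : Function.Injective ρ)
    (a : MonoidAlgebra k M)
    (ha : ∀ d : ℕ,
      a.coeff.sum (fun m c =>
        c • PiTensorProduct.map (fun _ : Fin d => (ρ m : V →ₗ[k] V))) = 0) :
    a = 0 := by
  classical
  ext m₀
  by_cases hm₀ : m₀ ∈ a.coeff.support
  swap
  · simpa using Finsupp.notMem_support_iff.mp hm₀
  -- separating vectors and functionals
  have hsep : ∀ m : M, ∃ (w : V) (ψ : Module.Dual k V),
      m ∈ a.coeff.support.erase m₀ → ψ (ρ m w) ≠ ψ (ρ m₀ w) := by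
    intro m
    by_cases hm : m ∈ a.coeff.support.erase m₀
    · have hne : ρ m ≠ ρ m₀ := fun h => (Finset.ne_of_mem_erase hm) (hρ h)
      have hw' : ∃ w, ρ m w ≠ ρ m₀ w := by
        by_contra h; push_neg at h; exact hne (LinearMap.ext h)
      obtain ⟨w, hw⟩ := hw'
      have hsub : ρ m w - ρ m₀ w ≠ 0 := sub_ne_zero.mpr hw
      obtain ⟨ψ, hψ⟩ : ∃ ψ : Module.Dual k V, ψ (ρ m w - ρ m₀ w) ≠ 0 := by
        by_contra h; push_neg at h
        exact hsub ((Module.forall_dual_apply_eq_zero_iff k _).mp h)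
      exact ⟨w, ψ, fun _ => by
        simpa [map_sub, sub_ne_zero] using hψ⟩
    · exact ⟨0, 0, fun h => absurd h hm⟩
  choose w ψ hψ using hsep
  set A : M → M → k := fun m m' => ψ m (ρ m' (w m)) with hA
  set b : M → k := fun m => ψ m (ρ m (w m)) with hb
  set S : Finset M := a.coeff.support with hS
  set S' : Finset M := S.erase m₀ with hS'
  -- vanishing of sums of products of matrix coefficients over any finite set
  have hsum : ∀ T : Finset M, ∑ m' ∈ S, a.coeff m' * ∏ m ∈ T, A m m' = 0 := by
    intro T
    have hprod : ∀ m' : M, ∏ m ∈ T, A m m'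
        = ∏ j : Fin T.card, ψ (T.equivFin.symm j) (ρ m' (w (T.equivFin.symm j))) := by
      intro m'
      rw [← Finset.prod_coe_sort T (fun m => A m m')]
      exact Fintype.prod_equiv T.equivFin _ _ (fun x => by simp [hA])
    simp_rw [hprod]
    exact steinberg_key ρ a ha T.card _ _
  -- expand the interpolation polynomial
  have expand : ∑ m' ∈ S, a.coeff m' * ∏ m ∈ S', (A m m' - b m) = 0 := by
    have hexp : ∀ m' : M, ∏ m ∈ S', (A m m' - b m)
        = ∑ T ∈ S'.powerset, (∏ m ∈ T, A m m') * ∏ m ∈ S' \ T, (-b m) := by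
      intro m'
      simpa [sub_eq_add_neg] using Finset.prod_add (fun m => A m m') (fun m => -b m) S'
    simp_rw [hexp, Finset.mul_sum]
    rw [Finset.sum_comm]
    refine Finset.sum_eq_zero fun T hT => ?_
    have h1 : ∑ m' ∈ S, a.coeff m' * ((∏ m ∈ T, A m m') * ∏ m ∈ S' \ T, (-b m))
        = (∑ m' ∈ S, a.coeff m' * ∏ m ∈ T, A m m') * ∏ m ∈ S' \ T, (-b m) := by
      rw [Finset.sum_mul]
      exact Finset.sum_congr rfl fun _ _ => (mul_assoc _ _ _).symm
    rw [h1, hsum T, zero_mul]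
  -- split off the m₀ term; all other terms vanish
  rw [← Finset.add_sum_erase S _ hm₀] at expand
  have hrest : ∑ m' ∈ S.erase m₀, a.coeff m' * ∏ m ∈ S', (A m m' - b m) = 0 := by
    refine Finset.sum_eq_zero fun m' hm' => ?_
    have : ∏ m ∈ S', (A m m' - b m) = 0 :=
      Finset.prod_eq_zero hm' (by simp [hA, hb])
    rw [this, mul_zero]
  rw [hrest, add_zero] at expand
  have hP : ∏ m ∈ S', (A m m₀ - b m) ≠ 0 := by
    refine Finset.prod_ne_zero_iff.mpr fun m hm => ?_
    exact sub_ne_zero.mpr (Ne.symm (hψ m hm))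
  exact (mul_eq_zero.mp expand).resolve_right hP
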